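/- arXiv:1001.2927 — 4 statements merged into one kernel-verified Lean document; each statement's English description precedes it below -/
import Mathlib

section
/- The derived (commutator) subgroup of the group Sol is exactly the subgroup K = ℝ² × {0}, i.e. it equals the kernel of the projection homomorphism ((x,y),z) ↦ z from Sol onto ℝ. -/
/-- The action of `λ ∈ ℝ` on `ℝ²` by `(x, y) ↦ (e^λ x, e^{-λ} y)`, as an
additive group automorphism. -/
noncomputable def solAct (l : ℝ) : (ℝ × ℝ) ≃+ (ℝ × ℝ) where
  toFun p := (Real.exp l * p.1, Real.exp (-l) * p.2)
  invFun p := (Real.exp (-l) * p.1, Real.exp l * p.2)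
  left_inv p := by
    refine Prod.ext ?_ ?_ <;> simp [← mul_assoc, ← Real.exp_add]
  right_inv p := by
    refine Prod.ext ?_ ?_ <;> simp [← mul_assoc, ← Real.exp_add]
  map_add' p q := by
    simp [Prod.ext_iff]
    constructor <;> ring

/-- The homomorphism `Multiplicative ℝ →* MulAut (Multiplicative (ℝ × ℝ))`
defining the group `Sol` as a semidirect product. -/
noncomputable def solPhi : Multiplicative ℝ →* MulAut (Multiplicative (ℝ × ℝ)) where
  toFun l := AddEquiv.toMultiplicative (solAct l.toAdd)
  map_one' := by
    ext p <;>
    simp [solAct, AddEquiv.toMultiplicative]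
  map_mul' a b := by
    ext p <;>
    simp [solAct, AddEquiv.toMultiplicative, MulAut.mul_def, MulEquiv.trans_apply,
      Real.exp_add, Prod.ext_iff, toAdd_mul, neg_add] <;>
    ring

/-- The group `Sol = ℝ² ⋊ ℝ`. -/
noncomputable abbrev Sol : Type := SemidirectProduct (Multiplicative (ℝ × ℝ)) (Multiplicative ℝ) solPhi

/-- The element `e₃ = ((0,0), 1)` of `Sol`. -/
noncomputable def e₃ : Sol := SemidirectProduct.inr (Multiplicative.ofAdd (1 : ℝ))

open scoped commutatorElement

/-- The derived subgroup of `Sol` is exactly `K = ℝ² × {0}`, the kernel of the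
projection `((x,y),z) ↦ z` onto `ℝ`. -/
theorem sol_commutator_eq_ker_rightHom :
    commutator Sol = (SemidirectProduct.rightHom : Sol →* Multiplicative ℝ).ker := by
  apply le_antisymm
  · rw [commutator, Subgroup.commutator_le]
    intro g _ h _
    rw [MonoidHom.mem_ker, map_commutatorElement]
    exact commutatorElement_eq_one_iff_commute.mpr (Commute.all _ _)
  · intro g hg
    rw [MonoidHom.mem_ker] at hg
    have hx : Real.exp 1 - 1 ≠ 0 := by
      have := Real.exp_one_gt_d9; nlinarith
    have hy : Real.exp (-1) - 1 ≠ 0 := by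
      have h1 : Real.exp (-1) < 1 := by
        rw [Real.exp_lt_one_iff]; norm_num
      linarith
    set x : ℝ := (Multiplicative.toAdd g.left).1 with hxdef
    set y : ℝ := (Multiplicative.toAdd g.left).2 with hydef
    set m : Multiplicative (ℝ × ℝ) :=
      Multiplicative.ofAdd (x / (Real.exp 1 - 1), y / (Real.exp (-1) - 1)) with hm
    have key : ⁅e₃, SemidirectProduct.inl (φ := solPhi) m⁆ = g := by
      have hg2 : g = SemidirectProduct.inl g.left := by
        have hr : g.right = 1 := hg
        conv_lhs => rw [← SemidirectProduct.inl_left_mul_inr_right g]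
        rw [hr]
        simp
      rw [commutatorElement_def, e₃, ← map_inv, ← SemidirectProduct.inl_aut, ← map_inv, ← map_mul]
      rw [hg2]
      congr 1
      have : solPhi (Multiplicative.ofAdd (1:ℝ)) m = Multiplicative.ofAdd
          (Real.exp 1 * (x / (Real.exp 1 - 1)), Real.exp (-1) * (y / (Real.exp (-1) - 1))) := by
        rfl
      rw [hm]
      apply Multiplicative.toAdd.injective
      simp only [toAdd_mul, toAdd_inv, toAdd_ofAdd, this]
      rw [Prod.ext_iff]
      constructor
      · show Real.exp 1 * (x / (Real.exp 1 - 1)) + -(x / (Real.exp 1 - 1)) = x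
        field_simp
        ring
      · show Real.exp (-1) * (y / (Real.exp (-1) - 1)) + -(y / (Real.exp (-1) - 1)) = y
        field_simp
        ring
    rw [← key]
    exact Subgroup.commutator_mem_commutator (Subgroup.mem_top _) (Subgroup.mem_top _)
end

section
/- Let A be a group automorphism of ℤ² and let G = ℤ² ⋊_A ℤ be the associated semidirect product. Then the derived (commutator) subgroup of G equals the image, under the canonical inclusion ℤ² → G, of the subgroup (A − I)(ℤ²) = { A v − v : v ∈ ℤ² } of ℤ². -/
/-- The homomorphism `Multiplicative ℤ →* MulAut (Multiplicative (ℤ × ℤ))`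
sending `n` to `Aⁿ`, for an automorphism `A` of `ℤ²`. -/
def torusPhi (A : (ℤ × ℤ) ≃+ (ℤ × ℤ)) :
    Multiplicative ℤ →* MulAut (Multiplicative (ℤ × ℤ)) :=
  zpowersHom (MulAut (Multiplicative (ℤ × ℤ))) (AddEquiv.toMultiplicative A)

/-- The semidirect product `G = ℤ² ⋊_A ℤ`, fundamental group of the suspension
of the torus diffeomorphism defined by `A`. -/
abbrev TorusSusp (A : (ℤ × ℤ) ≃+ (ℤ × ℤ)) : Type :=
  SemidirectProduct (Multiplicative (ℤ × ℤ)) (Multiplicative ℤ) (torusPhi A)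

/-- The subgroup `(A - I)(ℤ²)` of `ℤ²`, the range of `v ↦ A v - v`. -/
def rangeAminusI (A : (ℤ × ℤ) ≃+ (ℤ × ℤ)) : AddSubgroup (ℤ × ℤ) :=
  (A.toAddMonoidHom - AddMonoidHom.id (ℤ × ℤ)).range

open SemidirectProduct
open scoped commutatorElement

/-- The derived subgroup of `G = ℤ² ⋊_A ℤ` equals the image under the canonical
inclusion `ℤ² → G` of the subgroup `(A - I)(ℤ²)` of `ℤ²`. -/
theorem commutator_torusSusp (A : (ℤ × ℤ) ≃+ (ℤ × ℤ)) :
    commutator (TorusSusp A) =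
      Subgroup.map (SemidirectProduct.inl : Multiplicative (ℤ × ℤ) →* TorusSusp A)
        (AddSubgroup.toSubgroup (rangeAminusI A)) := by
  set B := AddEquiv.toMultiplicative A with hB
  set K : Subgroup (Multiplicative (ℤ × ℤ)) := AddSubgroup.toSubgroup (rangeAminusI A) with hKdef
  have hK : ∀ x : Multiplicative (ℤ × ℤ), x ∈ K ↔ ∃ u, B u * u⁻¹ = x := by
    intro x
    constructor
    · rintro ⟨v, hv⟩
      exact ⟨Multiplicative.ofAdd v, by
        simpa [hB, AddEquiv.toMultiplicative, ← ofAdd_neg, ← ofAdd_add,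
          sub_eq_add_neg] using congrArg Multiplicative.ofAdd hv⟩
    · rintro ⟨u, rfl⟩
      refine ⟨Multiplicative.toAdd u, ?_⟩
      simp [AddEquiv.toMultiplicative, sub_eq_add_neg]
      rfl
  have keyZ : ∀ (k : ℤ) (u : Multiplicative (ℤ × ℤ)), (B ^ k) u * u⁻¹ ∈ K := by
    intro k
    induction k using Int.induction_on with
    | zero => intro u; simpa using (hK 1).mpr ⟨1, by simp⟩
    | succ k ih =>
        intro u
        have e1 : (B ^ ((k : ℤ) + 1)) u = (B ^ (k : ℤ)) (B u) := by
          rw [zpow_add_one]; rfl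
        have e : (B ^ ((k : ℤ) + 1)) u * u⁻¹
            = ((B ^ (k : ℤ)) (B u) * (B u)⁻¹) * (B u * u⁻¹) := by
          rw [e1]; group
        rw [e]
        exact mul_mem (ih (B u)) ((hK _).mpr ⟨u, rfl⟩)
    | pred k ih =>
        intro u
        have e1 : (B ^ (-(k : ℤ) - 1)) u = (B ^ (-(k : ℤ))) (B⁻¹ u) := by
          rw [zpow_sub_one]; rfl
        have e2 : B (B⁻¹ u) = u := by simp
        have e : (B ^ (-(k : ℤ) - 1)) u * u⁻¹
            = ((B ^ (-(k : ℤ))) (B⁻¹ u) * (B⁻¹ u)⁻¹) * (B (B⁻¹ u) * (B⁻¹ u)⁻¹)⁻¹ := by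
          rw [e1, e2]; group
        rw [e]
        exact mul_mem (ih (B⁻¹ u)) (inv_mem ((hK _).mpr ⟨B⁻¹ u, rfl⟩))
  have key : ∀ (m : Multiplicative ℤ) (u : Multiplicative (ℤ × ℤ)),
      torusPhi A m u * u⁻¹ ∈ K := fun m u => keyZ (Multiplicative.toAdd m) u
  apply le_antisymm
  · rw [commutator_def, Subgroup.commutator_le]
    intro g₁ _ g₂ _
    refine ⟨⁅g₁, g₂⁆.left, ?_, ?_⟩
    · simp only [commutatorElement_def, mul_left, inv_left, mul_right, inv_right,
        ← MulAut.mul_apply, ← map_mul, mul_inv_cancel_comm, mul_inv_cancel, map_one,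
        MulAut.one_apply]
      have e : g₁.left * torusPhi A g₁.right g₂.left * torusPhi A g₂.right g₁.left⁻¹ * g₂.left⁻¹
          = (torusPhi A g₁.right g₂.left * g₂.left⁻¹) * (torusPhi A g₂.right g₁.left⁻¹ * g₁.left⁻¹⁻¹) := by
        simp [mul_comm, mul_left_comm, mul_assoc]
      rw [e]
      exact mul_mem (key _ _) (key _ _)
    · ext : 1
      · simp
      · simp only [commutatorElement_def, mul_right, inv_right, right_inl]
        rw [mul_comm g₁.right g₂.right]
        group
  · rintro x ⟨y, hy, rfl⟩
    obtain ⟨u, rfl⟩ := (hK y).mp hy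
    have h1 : torusPhi A (Multiplicative.ofAdd 1) = B := by
      simp [torusPhi, hB]
    have e : (inl (B u * u⁻¹) : TorusSusp A)
        = ⁅(inr (Multiplicative.ofAdd 1) : TorusSusp A), inl u⁆ := by
      rw [commutatorElement_def, ← h1, map_mul, map_inv, inl_aut, map_inv]
    rw [e]
    exact Subgroup.commutator_mem_commutator (Subgroup.mem_top _) (Subgroup.mem_top _)
end

section
/- For every real number k with 0 ≤ k < 1, the following inequality holds: (8 / (√2 · √(1 + k²))) · ( E(k) − (K(k)/2)·(1 − k²) ) ≥ 4 − π, where E(k) and K(k) are the complete elliptic integrals of the second and first kind. (This is the length estimate 8LK√|ab| ≥ 4 − π for the type A geodesics homotopic to closed geodesics of type C on a Sol manifold.) -/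
open Real intervalIntegral

/-- The complete elliptic integral of the second kind. -/
noncomputable def ellipticE (k : ℝ) : ℝ :=
  ∫ θ in (0 : ℝ)..(π / 2), Real.sqrt (1 - k ^ 2 * Real.sin θ ^ 2)

/-- The complete elliptic integral of the first kind. -/
noncomputable def ellipticK (k : ℝ) : ℝ :=
  ∫ θ in (0 : ℝ)..(π / 2), (1 - k ^ 2 * Real.sin θ ^ 2) ^ (-(1 / 2) : ℝ)

/-- The length estimate `8LK√|ab| ≥ 4 - π` for type A geodesics homotopic to
closed geodesics of type C: for `0 ≤ k < 1`,
`(8 / (√2 √(1 + k²))) (E(k) - (K(k)/2)(1 - k²)) ≥ 4 - π`. -/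
theorem type_A_length_estimate (k : ℝ) (hk0 : 0 ≤ k) (hk1 : k < 1) :
    8 / (Real.sqrt 2 * Real.sqrt (1 + k ^ 2)) *
        (ellipticE k - ellipticK k / 2 * (1 - k ^ 2)) ≥ 4 - π := by
  have hk2 : k ^ 2 < 1 := by nlinarith
  have hpos : ∀ θ : ℝ, 0 < 1 - k ^ 2 * Real.sin θ ^ 2 := by
    intro θ
    nlinarith [Real.sin_sq_le_one θ, sq_nonneg k, sq_nonneg (Real.sin θ),
      mul_nonneg (sq_nonneg k) (sq_nonneg (Real.sin θ))]
  have hcontBase : Continuous fun θ : ℝ => 1 - k ^ 2 * Real.sin θ ^ 2 :=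
    continuous_const.sub (continuous_const.mul (Real.continuous_sin.pow 2))
  have hcontE : Continuous fun θ : ℝ => Real.sqrt (1 - k ^ 2 * Real.sin θ ^ 2) :=
    hcontBase.sqrt
  have hcontK : Continuous fun θ : ℝ => (1 - k ^ 2 * Real.sin θ ^ 2) ^ (-(1 / 2) : ℝ) :=
    hcontBase.rpow_const (fun θ => Or.inl (hpos θ).ne')
  have hIE : IntervalIntegrable (fun θ : ℝ => Real.sqrt (1 - k ^ 2 * Real.sin θ ^ 2))
      MeasureTheory.volume 0 (π / 2) := hcontE.intervalIntegrable _ _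
  have hIK : IntervalIntegrable (fun θ : ℝ => (1 - k ^ 2 * Real.sin θ ^ 2) ^ (-(1 / 2) : ℝ))
      MeasureTheory.volume 0 (π / 2) := hcontK.intervalIntegrable _ _
  have hpi2 : (0 : ℝ) ≤ π / 2 := by positivity
  have hmain : ellipticE k - ellipticK k / 2 * (1 - k ^ 2) ≥ 1 / 2 := by
    have hEK : ellipticE k - ellipticK k / 2 * (1 - k ^ 2)
        = ∫ θ in (0 : ℝ)..(π / 2), (Real.sqrt (1 - k ^ 2 * Real.sin θ ^ 2)
            - (1 - k ^ 2) / 2 * (1 - k ^ 2 * Real.sin θ ^ 2) ^ (-(1 / 2) : ℝ)) := by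
      rw [intervalIntegral.integral_sub hIE (hIK.const_mul ((1 - k ^ 2) / 2)),
        intervalIntegral.integral_const_mul]
      unfold ellipticE ellipticK
      ring
    have hle : (∫ θ in (0 : ℝ)..(π / 2), Real.cos θ / 2)
        ≤ ∫ θ in (0 : ℝ)..(π / 2), (Real.sqrt (1 - k ^ 2 * Real.sin θ ^ 2)
            - (1 - k ^ 2) / 2 * (1 - k ^ 2 * Real.sin θ ^ 2) ^ (-(1 / 2) : ℝ)) := by
      apply intervalIntegral.integral_mono_on hpi2
        ((Real.continuous_cos.div_const 2).intervalIntegrable _ _)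
        (hIE.sub (hIK.const_mul ((1 - k ^ 2) / 2)))
      intro θ hθ
      have hu0 : 0 < 1 - k ^ 2 * Real.sin θ ^ 2 := hpos θ
      have hcos0 : 0 ≤ Real.cos θ :=
        Real.cos_nonneg_of_mem_Icc ⟨by linarith [hθ.1, Real.pi_pos], hθ.2⟩
      have hsq : Real.cos θ ^ 2 ≤ 1 - k ^ 2 * Real.sin θ ^ 2 := by
        nlinarith [Real.sin_sq_add_cos_sq θ, sq_nonneg (Real.sin θ)]
      have h1 : Real.cos θ ≤ Real.sqrt (1 - k ^ 2 * Real.sin θ ^ 2) := by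
        calc Real.cos θ = Real.sqrt (Real.cos θ ^ 2) := (Real.sqrt_sq hcos0).symm
          _ ≤ _ := Real.sqrt_le_sqrt hsq
      have hsu : 0 < Real.sqrt (1 - k ^ 2 * Real.sin θ ^ 2) := Real.sqrt_pos.mpr hu0
      have hrpow : (1 - k ^ 2 * Real.sin θ ^ 2) ^ (-(1 / 2) : ℝ)
          = (Real.sqrt (1 - k ^ 2 * Real.sin θ ^ 2))⁻¹ := by
        rw [Real.rpow_neg hu0.le, ← Real.rpow_natCast, ← Real.sqrt_eq_rpow]
      have h2 : 1 - k ^ 2 ≤ 1 - k ^ 2 * Real.sin θ ^ 2 := by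
        nlinarith [Real.sin_sq_le_one θ, sq_nonneg k]
      have hmul : Real.sqrt (1 - k ^ 2 * Real.sin θ ^ 2) * Real.sqrt (1 - k ^ 2 * Real.sin θ ^ 2)
          = 1 - k ^ 2 * Real.sin θ ^ 2 := Real.mul_self_sqrt hu0.le
      have key : (1 - k ^ 2) / 2 * (Real.sqrt (1 - k ^ 2 * Real.sin θ ^ 2))⁻¹
          ≤ Real.sqrt (1 - k ^ 2 * Real.sin θ ^ 2) / 2 := by
        rw [mul_inv_le_iff₀ hsu]
        nlinarith
      rw [hrpow]
      nlinarith
    have hcalc : (∫ θ in (0 : ℝ)..(π / 2), Real.cos θ / 2) = 1 / 2 := by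
      simp [intervalIntegral.integral_div]
    linarith [hEK ▸ (hcalc ▸ hle)]
  have h1k : (0 : ℝ) < 1 + k ^ 2 := by positivity
  have hfacpos : 0 < Real.sqrt 2 * Real.sqrt (1 + k ^ 2) := by positivity
  have hfac : Real.sqrt 2 * Real.sqrt (1 + k ^ 2) ≤ 2 := by
    rw [← Real.sqrt_mul (by norm_num : (0:ℝ) ≤ 2)]
    calc Real.sqrt (2 * (1 + k ^ 2)) ≤ Real.sqrt 4 := Real.sqrt_le_sqrt (by nlinarith)
      _ = 2 := by
        rw [show (4:ℝ) = 2 ^ 2 by norm_num, Real.sqrt_sq (by norm_num : (0:ℝ) ≤ 2)]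
  have h4 : (4 : ℝ) ≤ 8 / (Real.sqrt 2 * Real.sqrt (1 + k ^ 2)) := by
    rw [le_div_iff₀ hfacpos]; linarith
  have hprod : (4 : ℝ) * (1 / 2) ≤ 8 / (Real.sqrt 2 * Real.sqrt (1 + k ^ 2)) *
      (ellipticE k - ellipticK k / 2 * (1 - k ^ 2)) :=
    mul_le_mul h4 hmain (by norm_num) (by linarith)
  have hpi : (2 : ℝ) ≤ π := by linarith [Real.pi_gt_three]
  linarith
end

section
/- Let G be the fundamental group of the Klein bottle, presented with two generators a, b and the single relation a·b·a⁻¹·b = 1. Then the derived (commutator) subgroup of G equals the cyclic subgroup generated by b², i.e. commutator G = Subgroup.closure {b²}. -/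
/-- The relator `a b a⁻¹ b` of the Klein bottle group, where `a` and `b` are
the two free generators. -/
def kleinRels : Set (FreeGroup (Fin 2)) :=
  {FreeGroup.of 0 * FreeGroup.of 1 * (FreeGroup.of 0)⁻¹ * FreeGroup.of 1}

/-- The fundamental group `⟨a, b ∣ a b a⁻¹ b⟩` of the Klein bottle. -/
abbrev KleinGroup : Type := PresentedGroup kleinRels

open scoped commutatorElement

namespace KleinAux

local notation "a" => PresentedGroup.of (rels := kleinRels) (0 : Fin 2)
local notation "b" => PresentedGroup.of (rels := kleinRels) (1 : Fin 2)

lemma rel : a * b * a⁻¹ * b = 1 := by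
  have h : (FreeGroup.of 0 * FreeGroup.of 1 * (FreeGroup.of 0)⁻¹ * FreeGroup.of 1 :
      FreeGroup (Fin 2)) ∈ Subgroup.normalClosure kleinRels :=
    Subgroup.subset_normalClosure rfl
  exact (QuotientGroup.eq_one_iff _).mpr h

lemma conj1 : a * b * a⁻¹ = b⁻¹ := by
  have := rel
  rw [mul_eq_one_iff_eq_inv] at this
  exact this

lemma conj1' : a * b⁻¹ * a⁻¹ = b := by
  have h : a * b⁻¹ * a⁻¹ = (a * b * a⁻¹)⁻¹ := by group
  rw [h, conj1, inv_inv]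

lemma conj2 : a⁻¹ * b * a = b⁻¹ := by
  have h : a⁻¹ * (a * b⁻¹ * a⁻¹) * a = b⁻¹ := by group
  rw [conj1'] at h
  exact h

/-- The candidate subgroup. -/
noncomputable abbrev N : Subgroup KleinGroup := Subgroup.closure {b ^ 2}

lemma conj_zpow {G : Type*} [Group G] (g x : G) (k : ℤ) :
    g * x ^ k * g⁻¹ = (g * x * g⁻¹) ^ k := by
  rw [← MulAut.conj_apply, map_zpow, MulAut.conj_apply]

lemma mem_N_iff {g : KleinGroup} : g ∈ N ↔ ∃ k : ℤ, (b ^ 2) ^ k = g := by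
  rw [show N = Subgroup.zpowers (b ^ 2) from (Subgroup.zpowers_eq_closure _).symm]
  exact Subgroup.mem_zpowers_iff

lemma conj_a_sq : a * b ^ 2 * a⁻¹ = (b ^ 2)⁻¹ := by
  have h : a * b ^ 2 * a⁻¹ = (a * b * a⁻¹) * (a * b * a⁻¹) := by rw [pow_two]; group
  rw [h, conj1, pow_two]; group

lemma conj_a'_sq : a⁻¹ * b ^ 2 * a = (b ^ 2)⁻¹ := by
  have h : a⁻¹ * b ^ 2 * a = (a⁻¹ * b * a) * (a⁻¹ * b * a) := by rw [pow_two]; group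
  rw [h, conj2, pow_two]; group

lemma a_mem_normalizer : a ∈ Subgroup.normalizer (N : Set KleinGroup) := by
  rw [Subgroup.mem_normalizer_iff]
  intro h
  constructor
  · rintro hh
    obtain ⟨k, rfl⟩ := mem_N_iff.mp hh
    rw [mem_N_iff]
    refine ⟨-k, ?_⟩
    rw [conj_zpow, conj_a_sq]
    group
  · rintro hh
    obtain ⟨k, hk⟩ := mem_N_iff.mp hh
    have h2 : h = a⁻¹ * (b ^ 2) ^ k * a := by rw [hk]; group
    rw [h2, mem_N_iff]
    refine ⟨-k, ?_⟩
    rw [show a⁻¹ * (b ^ 2) ^ k * a = a⁻¹ * (b ^ 2) ^ k * a⁻¹⁻¹ by rw [inv_inv], conj_zpow,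
      show a⁻¹ * b ^ 2 * a⁻¹⁻¹ = a⁻¹ * b ^ 2 * a by rw [inv_inv], conj_a'_sq]
    group

lemma b_mem_normalizer : b ∈ Subgroup.normalizer (N : Set KleinGroup) := by
  rw [Subgroup.mem_normalizer_iff]
  intro h
  constructor
  · rintro hh
    obtain ⟨k, rfl⟩ := mem_N_iff.mp hh
    rw [mem_N_iff]
    refine ⟨k, ?_⟩
    rw [conj_zpow, show b * b ^ 2 * b⁻¹ = b ^ 2 by rw [pow_two]; group]
  · rintro hh
    obtain ⟨k, hk⟩ := mem_N_iff.mp hh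
    have h2 : h = b⁻¹ * (b ^ 2) ^ k * b := by rw [hk]; group
    rw [h2, mem_N_iff]
    refine ⟨k, ?_⟩
    rw [show b⁻¹ * (b ^ 2) ^ k * b = b⁻¹ * (b ^ 2) ^ k * b⁻¹⁻¹ by rw [inv_inv], conj_zpow,
      show b⁻¹ * b ^ 2 * b⁻¹⁻¹ = b ^ 2 by rw [inv_inv, pow_two]; group]

lemma N_normal : N.Normal := by
  rw [← Subgroup.normalizer_eq_top_iff, eq_top_iff, ← PresentedGroup.closure_range_of kleinRels,
    Subgroup.closure_le]
  rintro _ ⟨x, rfl⟩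
  rw [SetLike.mem_coe]
  fin_cases x
  · exact a_mem_normalizer
  · exact b_mem_normalizer

lemma comm_ab_mem : ⁅a, b⁆ ∈ N := by
  rw [commutatorElement_def]
  have h : a * b * a⁻¹ * b⁻¹ = (a * b * a⁻¹) * b⁻¹ := by group
  rw [h, conj1, mem_N_iff]
  exact ⟨-1, by rw [zpow_neg_one, ← mul_inv_rev, pow_two]⟩

lemma comm_gen_mem : ∀ x y : Fin 2, ⁅(PresentedGroup.of (rels := kleinRels) x),
    (PresentedGroup.of (rels := kleinRels) y)⁆ ∈ N := by
  have hba : ⁅b, a⁆ ∈ N := by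
    rw [show ⁅b, a⁆ = ⁅a, b⁆⁻¹ by rw [commutatorElement_inv]]
    exact N.inv_mem comm_ab_mem
  intro x y
  fin_cases x <;> fin_cases y
  · exact (show ⁅a, a⁆ = 1 by group) ▸ N.one_mem
  · exact comm_ab_mem
  · exact hba
  · exact (show ⁅b, b⁆ = 1 by group) ▸ N.one_mem

lemma key : ∀ g h : KleinGroup, ⁅g, h⁆ ∈ N := by
  letI := N_normal
  set π := QuotientGroup.mk' N with hπ
  have hcom : ∀ g h : KleinGroup, ⁅g, h⁆ ∈ N ↔ Commute (π g) (π h) := by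
    intro g h
    rw [← commutatorElement_eq_one_iff_commute, ← map_commutatorElement]
    exact (QuotientGroup.eq_one_iff _).symm
  -- first: generators are central in the quotient
  have hgen : ∀ x : Fin 2, π (PresentedGroup.of x) ∈ Subgroup.center (KleinGroup ⧸ N) := by
    intro x
    rw [Subgroup.mem_center_iff]
    intro q
    induction q using QuotientGroup.induction_on with
    | H h =>
      have : h ∈ Subgroup.comap π (Subgroup.centralizer {π (PresentedGroup.of x)}) := by
        have htop : (⊤ : Subgroup KleinGroup) ≤
            Subgroup.comap π (Subgroup.centralizer {π (PresentedGroup.of x)}) := by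
          rw [← PresentedGroup.closure_range_of kleinRels, Subgroup.closure_le]
          rintro _ ⟨y, rfl⟩
          simp only [SetLike.mem_coe, Subgroup.mem_comap, Subgroup.mem_centralizer_singleton_iff]
          exact ((hcom _ _).mp (comm_gen_mem x y)).symm.eq
        exact htop (Subgroup.mem_top h)
      exact (by simpa [Subgroup.mem_comap, Subgroup.mem_centralizer_singleton_iff] using this :
        π h * π (PresentedGroup.of x) = π (PresentedGroup.of x) * π h)
  intro g h
  rw [hcom]
  have hg : π g ∈ Subgroup.center (KleinGroup ⧸ N) := by
    have htop : (⊤ : Subgroup KleinGroup) ≤ Subgroup.comap π (Subgroup.center _) := by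
      rw [← PresentedGroup.closure_range_of kleinRels, Subgroup.closure_le]
      rintro _ ⟨y, rfl⟩
      exact hgen y
    exact htop (Subgroup.mem_top g)
  exact (Subgroup.mem_center_iff.mp hg (π h)).symm

end KleinAux

/-- The derived subgroup of the Klein bottle group `⟨a, b ∣ a b a⁻¹ b⟩` is
the cyclic subgroup generated by `b²`. -/
theorem klein_commutator_eq_closure_b_sq :
    commutator KleinGroup =
      Subgroup.closure {(PresentedGroup.of (rels := kleinRels) 1) ^ 2} := by
  apply le_antisymm
  · rw [commutator_def, Subgroup.commutator_le]
    intro g _ h _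
    exact KleinAux.key g h
  · rw [Subgroup.closure_le, Set.singleton_subset_iff]
    have h1 : ⁅(PresentedGroup.of (rels := kleinRels) 0),
        (PresentedGroup.of (rels := kleinRels) 1)⁆ ∈ commutator KleinGroup := by
      rw [commutator_def]
      exact Subgroup.commutator_mem_commutator (Subgroup.mem_top _) (Subgroup.mem_top _)
    have h2 : (PresentedGroup.of (rels := kleinRels) 1) ^ 2 =
        ⁅(PresentedGroup.of (rels := kleinRels) 0),
          (PresentedGroup.of (rels := kleinRels) 1)⁆⁻¹ := by
      rw [commutatorElement_def]
      have h3 : (PresentedGroup.of (rels := kleinRels) 0 * PresentedGroup.of 1 *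
          (PresentedGroup.of 0)⁻¹ * (PresentedGroup.of 1)⁻¹)⁻¹ =
          PresentedGroup.of 1 * (PresentedGroup.of 0 * PresentedGroup.of 1 *
            (PresentedGroup.of 0)⁻¹)⁻¹ := by group
      rw [h3, KleinAux.conj1]
      simp [pow_two]
    rw [h2]
    exact (commutator KleinGroup).inv_mem h1
end
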